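/- Let d ≥ 1, λ > 0, and let f : ℝ^d → ℝ be continuous, coercive, and λ-concave. Define f*(x) = sup_{y ∈ ℝ^d} (⟨x,y⟩ − f(y)) and f**(y) = sup_{x ∈ ℝ^d} (⟨x,y⟩ − f*(x)). If f**(y) = f(y) at some point y ∈ ℝ^d, then f is differentiable at y, f** is differentiable at y, and ∇f(y) = ∇f**(y). -/

import Mathlib

open scoped RealInnerProductSpace
noncomputable section

lemma supergrad {d : ℕ} (g : EuclideanSpace ℝ (Fin d) → ℝ)
    (hg : ConcaveOn ℝ Set.univ g) (hc : Continuous g) (y : EuclideanSpace ℝ (Fin d)) :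
    ∃ p : EuclideanSpace ℝ (Fin d), ∀ z, g z ≤ g y + ⟪p, z - y⟫ := by
  classical
  set S : Set ((EuclideanSpace ℝ (Fin d)) × ℝ) := {q | q.2 < g q.1} with hS
  have hSopen : IsOpen S := by
    have hcont2 : Continuous fun q : (EuclideanSpace ℝ (Fin d)) × ℝ => q.2 - g q.1 :=
      continuous_snd.sub (hc.comp continuous_fst)
    have : S = (fun q : (EuclideanSpace ℝ (Fin d)) × ℝ => q.2 - g q.1) ⁻¹' Set.Iio 0 := by
      ext q; simp [hS, sub_neg]
    rw [this]
    exact hcont2.isOpen_preimage _ isOpen_Iio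
  have hSconv : Convex ℝ S := by
    rintro q hq r hr a b ha hb hab
    have hgc := hg.2 (Set.mem_univ q.1) (Set.mem_univ r.1) ha hb hab
    simp only [smul_eq_mul] at hgc
    have hq' : q.2 < g q.1 := hq
    have hr' : r.2 < g r.1 := hr
    show (a • q + b • r).2 < g (a • q + b • r).1
    have h1 : (a • q + b • r).1 = a • q.1 + b • r.1 := rfl
    have h2 : (a • q + b • r).2 = a * q.2 + b * r.2 := rfl
    rw [h1, h2]
    rcases eq_or_lt_of_le ha with h | h
    · have hb1 : b = 1 := by linarith
      have ha0 : a = 0 := h.symm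
      subst hb1; rw [ha0] at hgc ⊢
      have : (0:ℝ) * q.2 + 1 * r.2 < g r.1 := by linarith
      calc (0:ℝ) * q.2 + 1 * r.2 < g r.1 := this
        _ ≤ g ((0:ℝ) • q.1 + (1:ℝ) • r.1) := by linarith
    · have hs1 : a * q.2 < a * g q.1 := (mul_lt_mul_iff_right₀ h).2 hq'
      have hs2 : b * r.2 ≤ b * g r.1 := mul_le_mul_of_nonneg_left hr'.le hb
      linarith
  have hynot : ((y, g y) : (EuclideanSpace ℝ (Fin d)) × ℝ) ∉ S := by simp [hS]
  obtain ⟨L, hL⟩ := geometric_hahn_banach_open_point hSconv hSopen hynot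
  set ψ : EuclideanSpace ℝ (Fin d) →L[ℝ] ℝ :=
    L.comp (ContinuousLinearMap.inl ℝ (EuclideanSpace ℝ (Fin d)) ℝ) with hψ
  set c : ℝ := L (0, 1) with hcdef
  have hdecomp : ∀ (z : EuclideanSpace ℝ (Fin d)) (t : ℝ), L (z, t) = ψ z + t * c := by
    intro z t
    have h0 : ((z, t) : (EuclideanSpace ℝ (Fin d)) × ℝ)
        = (z, 0) + t • ((0 : EuclideanSpace ℝ (Fin d)), (1 : ℝ)) := by
      simp [Prod.ext_iff]
    rw [h0, map_add, map_smul, smul_eq_mul, hcdef]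
    rfl
  have hcpos : 0 < c := by
    have h1 := hL (y, g y - 1) (by simp [hS])
    rw [hdecomp] at h1
    rw [show ((y, g y) : (EuclideanSpace ℝ (Fin d)) × ℝ) = (y, g y) from rfl, hdecomp] at h1
    linarith
  have key : ∀ z : EuclideanSpace ℝ (Fin d), ψ z + g z * c ≤ ψ y + g y * c := by
    intro z
    by_contra h
    push_neg at h
    set D : ℝ := (ψ z + g z * c) - (ψ y + g y * c) with hD
    have hDpos : 0 < D := by linarith
    have ht : g z - D / (2 * c) < g z := by
      have : 0 < D / (2 * c) := div_pos hDpos (by linarith)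
      linarith
    have h2 := hL (z, g z - D / (2 * c)) (by simpa [hS] using ht)
    rw [hdecomp, hdecomp] at h2
    have hcalc : (g z - D / (2 * c)) * c = g z * c - D / 2 := by
      field_simp
    rw [hcalc] at h2
    linarith
  set p : EuclideanSpace ℝ (Fin d) := (InnerProductSpace.toDual ℝ _).symm ((-c⁻¹) • ψ) with hpdef
  have hp : ∀ z : EuclideanSpace ℝ (Fin d), ⟪p, z⟫ = -(ψ z) / c := by
    intro z
    rw [hpdef, InnerProductSpace.toDual_symm_apply]
    simp only [ContinuousLinearMap.smul_apply, smul_eq_mul]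
    ring
  refine ⟨p, fun z => ?_⟩
  rw [inner_sub_right, hp, hp]
  have h4 : g z - g y ≤ (ψ y - ψ z) / c := (le_div_iff₀ hcpos).mpr (by nlinarith [key z])
  have h5 : -(ψ z) / c - -(ψ y) / c = (ψ y - ψ z) / c := by ring
  linarith

def conj {d : ℕ} (f : EuclideanSpace ℝ (Fin d) → ℝ)
    (x : EuclideanSpace ℝ (Fin d)) : ℝ :=
  ⨆ y : EuclideanSpace ℝ (Fin d), (⟪x, y⟫ - f y)

lemma conj_bdd {d : ℕ} (f : EuclideanSpace ℝ (Fin d) → ℝ) (hcont : Continuous f)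
    (hcoer : ∀ M : ℝ, ∃ R : ℝ, ∀ z, R ≤ ‖z‖ → M ≤ f z / ‖z‖)
    (x : EuclideanSpace ℝ (Fin d)) :
    BddAbove (Set.range fun u : EuclideanSpace ℝ (Fin d) => ⟪x, u⟫ - f u) := by
  obtain ⟨R0, hR⟩ := hcoer (‖x‖ + 1)
  set R : ℝ := max R0 1 with hRdef
  have hR1 : (1:ℝ) ≤ R := le_max_right _ _
  obtain ⟨u₀, hu₀mem, hu₀⟩ := (isCompact_closedBall (0 : EuclideanSpace ℝ (Fin d)) R).exists_isMinOn
    (Set.nonempty_of_mem (Metric.mem_closedBall_self (by linarith)))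
    (hcont.continuousOn)
  set m : ℝ := f u₀ with hm
  refine ⟨max (‖x‖ * R - m) 0, ?_⟩
  rintro _ ⟨u, rfl⟩
  rcases le_or_gt ‖u‖ R with hcase | hcase
  · have h1 : ⟪x, u⟫ ≤ ‖x‖ * ‖u‖ := real_inner_le_norm x u
    have h2 : ‖x‖ * ‖u‖ ≤ ‖x‖ * R := mul_le_mul_of_nonneg_left hcase (norm_nonneg x)
    have h3 : m ≤ f u := hu₀ (by simpa [Metric.mem_closedBall, dist_zero_right] using hcase)
    have : ⟪x, u⟫ - f u ≤ ‖x‖ * R - m := by linarith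
    exact this.trans (le_max_left _ _)
  · have hu0 : (0:ℝ) < ‖u‖ := by linarith
    have hRu : R0 ≤ ‖u‖ := le_of_lt (lt_of_le_of_lt (le_max_left R0 1) hcase)
    have h4 : (‖x‖ + 1) ≤ f u / ‖u‖ := hR u hRu
    have h5 : (‖x‖ + 1) * ‖u‖ ≤ f u := by
      rw [← le_div_iff₀ hu0]; exact h4
    have h1 : ⟪x, u⟫ ≤ ‖x‖ * ‖u‖ := real_inner_le_norm x u
    have : ⟪x, u⟫ - f u ≤ -‖u‖ := by nlinarith
    have h6 : ⟪x, u⟫ - f u ≤ 0 := by linarith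
    exact h6.trans (le_max_right _ _)

lemma le_conj {d : ℕ} (f : EuclideanSpace ℝ (Fin d) → ℝ) (hcont : Continuous f)
    (hcoer : ∀ M : ℝ, ∃ R : ℝ, ∀ z, R ≤ ‖z‖ → M ≤ f z / ‖z‖)
    (x u : EuclideanSpace ℝ (Fin d)) : ⟪x, u⟫ - f u ≤ conj f x :=
  le_ciSup (conj_bdd f hcont hcoer x) u

lemma biconj_le {d : ℕ} (f : EuclideanSpace ℝ (Fin d) → ℝ) (hcont : Continuous f)
    (hcoer : ∀ M : ℝ, ∃ R : ℝ, ∀ z, R ≤ ‖z‖ → M ≤ f z / ‖z‖)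
    (z : EuclideanSpace ℝ (Fin d)) : conj (conj f) z ≤ f z := by
  refine ciSup_le fun x => ?_
  have h := le_conj f hcont hcoer x z
  rw [real_inner_comm] at h
  linarith

lemma biconj_bdd {d : ℕ} (f : EuclideanSpace ℝ (Fin d) → ℝ) (hcont : Continuous f)
    (hcoer : ∀ M : ℝ, ∃ R : ℝ, ∀ z, R ≤ ‖z‖ → M ≤ f z / ‖z‖)
    (z : EuclideanSpace ℝ (Fin d)) :
    BddAbove (Set.range fun x : EuclideanSpace ℝ (Fin d) => ⟪z, x⟫ - conj f x) := by
  refine ⟨f z, ?_⟩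
  rintro _ ⟨x, rfl⟩
  have h := le_conj f hcont hcoer x z
  rw [real_inner_comm] at h
  simp only
  linarith

lemma biconj_convex {d : ℕ} (f : EuclideanSpace ℝ (Fin d) → ℝ) (hcont : Continuous f)
    (hcoer : ∀ M : ℝ, ∃ R : ℝ, ∀ z, R ≤ ‖z‖ → M ≤ f z / ‖z‖) :
    ConvexOn ℝ Set.univ (conj (conj f)) := by
  refine ⟨convex_univ, fun u _ v _ a b ha hb hab => ?_⟩
  refine ciSup_le fun x => ?_
  have h1 : ⟪a • u + b • v, x⟫ - conj f x
      = a * (⟪u, x⟫ - conj f x) + b * (⟪v, x⟫ - conj f x) := by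
    rw [inner_add_left, real_inner_smul_left, real_inner_smul_left]
    linear_combination conj f x * hab
  rw [h1]
  have h2 : ⟪u, x⟫ - conj f x ≤ conj (conj f) u := le_ciSup (biconj_bdd f hcont hcoer u) x
  have h3 : ⟪v, x⟫ - conj f x ≤ conj (conj f) v := le_ciSup (biconj_bdd f hcont hcoer v) x
  have := mul_le_mul_of_nonneg_left h2 ha
  have := mul_le_mul_of_nonneg_left h3 hb
  simp only [smul_eq_mul]
  linarith
lemma squeeze_grad {d : ℕ} (lam : ℝ) (hlam : 0 < lam)
    (h : EuclideanSpace ℝ (Fin d) → ℝ) (y s : EuclideanSpace ℝ (Fin d))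
    (hl : ∀ z, h y + ⟪s, z - y⟫ ≤ h z)
    (hu : ∀ z, h z ≤ h y + ⟪s, z - y⟫ + lam / 2 * ‖z - y‖ ^ 2) :
    HasGradientAt h s y := by
  rw [hasGradientAt_iff_isLittleO, Asymptotics.isLittleO_iff]
  intro c hc
  filter_upwards [Metric.ball_mem_nhds y (show (0:ℝ) < 2 * c / lam by positivity)] with z hz
  have hdist : ‖z - y‖ < 2 * c / lam := by rwa [Metric.mem_ball, dist_eq_norm] at hz
  have h1 := hl z
  have h2 := hu z
  rw [Real.norm_eq_abs, abs_le]
  have hn : (0:ℝ) ≤ ‖z - y‖ := norm_nonneg _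
  have hlamn : lam * ‖z - y‖ < 2 * c := by
    rw [lt_div_iff₀ hlam] at hdist; nlinarith
  constructor
  · nlinarith
  · nlinarith [sq_nonneg (‖z - y‖)]

theorem stmt10 (d : ℕ) (hd : 1 ≤ d) (lam : ℝ) (hlam : 0 < lam)
    (f : EuclideanSpace ℝ (Fin d) → ℝ)
    (hcont : Continuous f)
    (hcoer : ∀ M : ℝ, ∃ R : ℝ, ∀ z, R ≤ ‖z‖ → M ≤ f z / ‖z‖)
    (hConc : ConcaveOn ℝ Set.univ (fun y => f y - lam / 2 * ‖y‖ ^ 2))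
    (y : EuclideanSpace ℝ (Fin d))
    (htouch : conj (conj f) y = f y) :
    DifferentiableAt ℝ f y ∧ DifferentiableAt ℝ (conj (conj f)) y ∧
    gradient f y = gradient (conj (conj f)) y := by
  have hFle : ∀ z, conj (conj f) z ≤ f z := biconj_le f hcont hcoer
  have hFconv : ConvexOn ℝ Set.univ (conj (conj f)) := biconj_convex f hcont hcoer
  have hFcont : Continuous (conj (conj f)) := by
    rw [← continuousOn_univ]
    exact ConvexOn.continuousOn isOpen_univ hFconv
  -- supergradient of the concave shift of f
  have hgcont : Continuous (fun z : EuclideanSpace ℝ (Fin d) => f z - lam / 2 * ‖z‖ ^ 2) := by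
    exact hcont.sub (continuous_const.mul (continuous_norm.pow 2))
  obtain ⟨p, hp⟩ := supergrad _ hConc hgcont y
  set s : EuclideanSpace ℝ (Fin d) := p + lam • y with hs
  have hupper : ∀ z, f z ≤ f y + ⟪s, z - y⟫ + lam / 2 * ‖z - y‖ ^ 2 := by
    intro z
    have h := hp z
    have e1 : ⟪s, z - y⟫ = ⟪p, z - y⟫ + lam * ⟪y, z - y⟫ := by
      rw [hs, inner_add_left, real_inner_smul_left]
    have e2 : ‖z - y‖ ^ 2 = ‖z‖ ^ 2 - 2 * ⟪z, y⟫ + ‖y‖ ^ 2 := norm_sub_sq_real z y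
    have e3 : ⟪y, z - y⟫ = ⟪y, z⟫ - ‖y‖ ^ 2 := by
      rw [inner_sub_right, real_inner_self_eq_norm_sq]
    have e4 : ⟪z, y⟫ = ⟪y, z⟫ := real_inner_comm y z
    nlinarith
  -- subgradient of the biconjugate
  obtain ⟨q, hq⟩ := supergrad (fun z => -(conj (conj f) z))
    (by simpa [Pi.neg_def] using hFconv.neg) hFcont.neg y
  set x₀ : EuclideanSpace ℝ (Fin d) := -q with hx₀
  have hlow : ∀ z, f y + ⟪x₀, z - y⟫ ≤ conj (conj f) z := by
    intro z
    have h := hq z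
    rw [hx₀, inner_neg_left, ← htouch]
    linarith
  have hlowf : ∀ z, f y + ⟪x₀, z - y⟫ ≤ f z := fun z => (hlow z).trans (hFle z)
  -- x₀ = s
  have hxs : x₀ = s := by
    have hkey : ∀ t : ℝ, 0 < t →
        t * ‖x₀ - s‖ ^ 2 ≤ lam / 2 * (t ^ 2 * ‖x₀ - s‖ ^ 2) := by
      intro t ht
      have h1 := hlowf (y + t • (x₀ - s))
      have h2 := hupper (y + t • (x₀ - s))
      have e0 : y + t • (x₀ - s) - y = t • (x₀ - s) := add_sub_cancel_left y _
      rw [e0] at h1 h2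
      have e1 : ⟪x₀, t • (x₀ - s)⟫ - ⟪s, t • (x₀ - s)⟫ = t * ‖x₀ - s‖ ^ 2 := by
        rw [real_inner_smul_right, real_inner_smul_right, ← mul_sub,
          ← inner_sub_left, real_inner_self_eq_norm_sq]
      have e2 : ‖t • (x₀ - s)‖ ^ 2 = t ^ 2 * ‖x₀ - s‖ ^ 2 := by
        rw [norm_smul, Real.norm_eq_abs, mul_pow, sq_abs]
      rw [e2] at h2
      linarith
    have h3 := hkey (1 / lam) (by positivity)
    have hsq : ‖x₀ - s‖ ^ 2 ≤ 0 := by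
      have h4 := mul_le_mul_of_nonneg_left h3 (show (0:ℝ) ≤ 2 * lam by positivity)
      have e1 : 2 * lam * (1 / lam * ‖x₀ - s‖ ^ 2) = 2 * ‖x₀ - s‖ ^ 2 := by
        field_simp
      have e2 : 2 * lam * (lam / 2 * ((1 / lam) ^ 2 * ‖x₀ - s‖ ^ 2)) = ‖x₀ - s‖ ^ 2 := by
        field_simp
      rw [e1, e2] at h4
      linarith
    have : ‖x₀ - s‖ ^ 2 = 0 := le_antisymm hsq (sq_nonneg _)
    have : x₀ - s = 0 := by
      rwa [pow_eq_zero_iff (by norm_num), norm_eq_zero] at this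
    exact sub_eq_zero.mp this
  rw [hxs] at hlow hlowf
  have hgf : HasGradientAt f s y :=
    squeeze_grad lam hlam f y s (fun z => hlowf z) hupper
  have hgF : HasGradientAt (conj (conj f)) s y := by
    refine squeeze_grad lam hlam _ y s (fun z => ?_) (fun z => ?_)
    · rw [htouch]; exact hlow z
    · rw [htouch]; exact (hFle z).trans (hupper z)
  exact ⟨hgf.differentiableAt, hgF.differentiableAt, by rw [hgf.gradient, hgF.gradient]⟩
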